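/- Let k be a perfect field of characteristic p > 0, let V be a finite-dimensional k-vector space and let F be a Frobenius-semilinear endomorphism of V. Then there exist F-invariant k-subspaces V_s and V_n of V such that V is the internal direct sum of V_s and V_n, the restriction of F to V_s is bijective, and the restriction of F to V_n is nilpotent (i.e. some iterate F^N vanishes identically on V_n). -/

import Mathlib

section Aux

variable {p : ℕ} {k : Type*} [Field k] {V : Type*} [AddCommGroup V] [Module k V]
  {F : V → V}

private lemma aux_zero (hFadd : ∀ x y : V, F (x + y) = F x + F y) : F 0 = 0 := by
  have h := hFadd 0 0
  rw [add_zero] at h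
  exact left_eq_add.mp h

private lemma aux_iter_zero (hFadd : ∀ x y : V, F (x + y) = F x + F y) (n : ℕ) :
    F^[n] 0 = 0 := by
  induction n with
  | zero => rfl
  | succ n ih => rw [Function.iterate_succ_apply, aux_zero hFadd, ih]

private lemma aux_iter_add (hFadd : ∀ x y : V, F (x + y) = F x + F y) (n : ℕ) (x y : V) :
    F^[n] (x + y) = F^[n] x + F^[n] y := by
  induction n with
  | zero => rfl
  | succ n ih => rw [Function.iterate_succ_apply', Function.iterate_succ_apply',
      Function.iterate_succ_apply', ih, hFadd]

private lemma aux_iter_neg (hFadd : ∀ x y : V, F (x + y) = F x + F y) (n : ℕ) (x : V) :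
    F^[n] (-x) = -F^[n] x := by
  have h := aux_iter_add hFadd n x (-x)
  rw [add_neg_cancel, aux_iter_zero hFadd] at h
  exact (neg_eq_of_add_eq_zero_right h.symm).symm

private lemma aux_iter_sub (hFadd : ∀ x y : V, F (x + y) = F x + F y) (n : ℕ) (x y : V) :
    F^[n] (x - y) = F^[n] x - F^[n] y := by
  rw [sub_eq_add_neg, aux_iter_add hFadd, aux_iter_neg hFadd, sub_eq_add_neg]

private lemma aux_iter_smul (hFsmul : ∀ (c : k) (v : V), F (c • v) = c ^ p • F v)
    (n : ℕ) (c : k) (v : V) : F^[n] (c • v) = c ^ p ^ n • F^[n] v := by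
  induction n generalizing c v with
  | zero => simp
  | succ n ih =>
      rw [Function.iterate_succ_apply, hFsmul, ih, ← pow_mul, Function.iterate_succ_apply,
        pow_succ', pow_mul]

variable (F) in
private def auxK (hFadd : ∀ x y : V, F (x + y) = F x + F y)
    (hFsmul : ∀ (c : k) (v : V), F (c • v) = c ^ p • F v) (n : ℕ) : Submodule k V where
  carrier := {v | F^[n] v = 0}
  add_mem' := by
    intro a b ha hb
    simp only [Set.mem_setOf_eq] at ha hb ⊢
    rw [aux_iter_add hFadd, ha, hb, add_zero]
  zero_mem' := aux_iter_zero hFadd n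
  smul_mem' := by
    intro c v hv
    simp only [Set.mem_setOf_eq] at hv ⊢
    rw [aux_iter_smul hFsmul, hv, smul_zero]

variable (F) in
private def auxR (hFadd : ∀ x y : V, F (x + y) = F x + F y)
    (hFsmul : ∀ (c : k) (v : V), F (c • v) = c ^ p • F v)
    (hsurj : ∀ (n : ℕ) (c : k), ∃ d : k, d ^ p ^ n = c) (n : ℕ) : Submodule k V where
  carrier := Set.range F^[n]
  add_mem' := by
    rintro a b ⟨x, hx⟩ ⟨y, hy⟩
    exact ⟨x + y, by rw [aux_iter_add hFadd, hx, hy]⟩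
  zero_mem' := ⟨0, aux_iter_zero hFadd n⟩
  smul_mem' := by
    rintro c v ⟨x, hx⟩
    obtain ⟨d, hd⟩ := hsurj n c
    exact ⟨d • x, by rw [aux_iter_smul hFsmul, hd, hx]⟩

end Aux

/-- Let `k` be a perfect field of characteristic `p > 0`, `V` a
finite-dimensional `k`-vector space and `F` a Frobenius-semilinear endomorphism of `V`.
Then `V` decomposes as an internal direct sum of `F`-invariant subspaces `Vs` and `Vn`
such that `F` is bijective on `Vs` and nilpotent on `Vn`. -/
theorem stmt_0 (p : ℕ) [Fact p.Prime] (k : Type*) [Field k] [CharP k p] [PerfectRing k p]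
    (V : Type*) [AddCommGroup V] [Module k V] [FiniteDimensional k V]
    (F : V → V)
    (hFadd : ∀ x y : V, F (x + y) = F x + F y)
    (hFsmul : ∀ (c : k) (v : V), F (c • v) = c ^ p • F v) :
    ∃ Vs Vn : Submodule k V,
      IsCompl Vs Vn ∧
      (∀ v ∈ Vs, F v ∈ Vs) ∧
      (∀ v ∈ Vn, F v ∈ Vn) ∧
      Set.BijOn F (Vs : Set V) (Vs : Set V) ∧
      (∃ N : ℕ, ∀ v ∈ Vn, F^[N] v = 0) := by
  -- surjectivity of `x ↦ x ^ p ^ n` on `k`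
  have hsurj : ∀ (n : ℕ) (c : k), ∃ d : k, d ^ p ^ n = c := by
    intro n
    induction n with
    | zero => intro c; exact ⟨c, by simp⟩
    | succ n ih =>
        intro c
        obtain ⟨d, hd⟩ := ih c
        obtain ⟨d', hd'⟩ := surjective_frobenius k p d
        rw [frobenius_def] at hd'
        exact ⟨d', by rw [pow_succ', pow_mul, hd', hd]⟩
  set K : ℕ → Submodule k V := auxK F hFadd hFsmul with hK
  set R : ℕ → Submodule k V := auxR F hFadd hFsmul hsurj with hR
  have hKmem : ∀ n v, v ∈ K n ↔ F^[n] v = 0 := fun n v => Iff.rfl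
  have hRmem : ∀ n v, v ∈ R n ↔ ∃ x, F^[n] x = v := fun n v => Iff.rfl
  have hKmono : Monotone K := by
    apply monotone_nat_of_le_succ
    intro n v hv
    rw [hKmem] at *
    rw [Function.iterate_succ_apply', hv, aux_zero hFadd]
  have hRanti : ∀ n, R (n + 1) ≤ R n := by
    intro n v ⟨x, hx⟩
    exact ⟨F x, (Function.iterate_succ_apply F n x).symm.trans hx⟩
  have hRmono : Monotone (fun n => OrderDual.toDual (R n)) := by
    apply monotone_nat_of_le_succ
    intro n
    exact hRanti n
  obtain ⟨nK, hnK⟩ := monotone_stabilizes_iff_noetherian.mpr inferInstance ⟨K, hKmono⟩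
  obtain ⟨nR, hnR⟩ := monotone_stabilizes_iff_artinian.mpr inferInstance
    ⟨fun n => OrderDual.toDual (R n), hRmono⟩
  set n := max nK nR with hn
  have hKstab : ∀ m, n ≤ m → K m = K n := by
    intro m hm
    have h1 := hnK m (le_trans (le_max_left _ _) hm)
    have h2 := hnK n (le_max_left _ _)
    simp only [OrderHom.coe_mk] at h1 h2
    rw [← h1, ← h2]
  have hRstab : ∀ m, n ≤ m → R m = R n := by
    intro m hm
    have h1 := hnR m (le_trans (le_max_right _ _) hm)
    have h2 := hnR n (le_max_right _ _)
    simp only [OrderHom.coe_mk] at h1 h2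
    exact (OrderDual.toDual.injective (h2.symm.trans h1)).symm
  refine ⟨R n, K n, ?_, ?_, ?_, ?_, ⟨n, fun v hv => hv⟩⟩
  · -- IsCompl
    constructor
    · rw [disjoint_iff_inf_le]
      rintro v ⟨⟨x, hx⟩, hv2⟩
      have h2n : F^[2 * n] x = 0 := by
        rw [two_mul, Function.iterate_add_apply, hx]
        exact hv2
      have : x ∈ K (2 * n) := h2n
      rw [hKstab (2 * n) (by omega)] at this
      rw [hKmem] at this
      rw [← hx, this]
      rfl
    · rw [codisjoint_iff_le_sup]
      intro v _
      have : F^[n] v ∈ R n := ⟨v, rfl⟩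
      rw [← hRstab (2 * n) (by omega)] at this
      obtain ⟨w, hw⟩ := this
      have hw2 : F^[n] (F^[n] w) = F^[n] v := by
        rw [← Function.iterate_add_apply, ← two_mul]; exact hw
      refine Submodule.mem_sup.mpr ⟨F^[n] w, ⟨w, rfl⟩, v - F^[n] w, ?_, by abel⟩
      rw [hKmem, aux_iter_sub hFadd, hw2, sub_self]
  · -- F-invariance of R n
    rintro v ⟨x, hx⟩
    have : F v ∈ R (n + 1) := ⟨x, by rw [Function.iterate_succ_apply', hx]⟩
    rw [hRstab (n + 1) (by omega)] at this
    exact this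
  · -- F-invariance of K n
    intro v hv
    have hv' : F^[n] v = 0 := hv
    have : F v ∈ K (n + 1) := by
      show F^[n + 1] (F v) = 0
      rw [← Function.iterate_succ_apply F (n+1) v, Function.iterate_succ_apply',
        Function.iterate_succ_apply', hv', aux_zero hFadd, aux_zero hFadd]
    rw [hKstab (n + 1) (by omega)] at this
    exact this
  · -- BijOn
    refine ⟨?_, ?_, ?_⟩
    · rintro v ⟨x, hx⟩
      have : F v ∈ R (n + 1) := ⟨x, by rw [Function.iterate_succ_apply', hx]⟩
      rw [hRstab (n + 1) (by omega)] at this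
      exact this
    · rintro v₁ hv₁ v₂ hv₂ hFv
      have hsub : v₁ - v₂ ∈ R n := (R n).sub_mem hv₁ hv₂
      have hker : v₁ - v₂ ∈ K n := by
        have h1 : F (v₁ - v₂) = 0 := by
          have := aux_iter_sub hFadd 1 v₁ v₂
          simp only [Function.iterate_one] at this
          rw [this, hFv, sub_self]
        have hmem1 : v₁ - v₂ ∈ K 1 := by
          show F^[1] (v₁ - v₂) = 0
          rw [Function.iterate_one]; exact h1
        rcases Nat.eq_zero_or_pos n with h0 | hpos
        · rw [← hKstab 1 (by omega)]
          exact hmem1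
        · exact hKmono hpos hmem1
      obtain ⟨x, hx⟩ := hsub
      have h2n : F^[2 * n] x = 0 := by
        rw [two_mul, Function.iterate_add_apply, hx]
        exact hker
      have hx0 : x ∈ K (2 * n) := h2n
      rw [hKstab (2 * n) (by omega), hKmem] at hx0
      have : v₁ - v₂ = 0 := by rw [← hx, hx0]
      exact sub_eq_zero.mp this
    · rintro v ⟨x, hx⟩
      have : v ∈ R (n + 1) := by
        rw [hRstab (n + 1) (by omega)]
        exact ⟨x, hx⟩
      obtain ⟨w, hw⟩ := this
      refine ⟨F^[n] w, ⟨w, rfl⟩, ?_⟩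
      rw [← Function.iterate_succ_apply' F n w, hw]
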